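/- Let ζ be an analytic function on an open subset U of ℂ² (with coordinates (x₁,x₂)) satisfying 4ζ³ + 2x₂ζ + x₁ = 0 identically on U. Then the function F = (1/4)(3x₁ζ + 2x₂ζ²) satisfies ∂₁F = ζ and ∂₂F = ζ² on U. In other words, F is a primitive of the 1-form ζ dx₁ + ζ² dx₂. -/

import Mathlib

/-- Partial derivative in the first variable `x₁` for functions of two complex variables. -/
noncomputable def E1 (f : ℂ → ℂ → ℂ) : ℂ → ℂ → ℂ :=
  fun a b => deriv (fun w => f w b) a

/-- Partial derivative in the second variable `x₂`. -/
noncomputable def E2 (f : ℂ → ℂ → ℂ) : ℂ → ℂ → ℂ :=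
  fun a b => deriv (fun w => f a w) b

/-- If `ζ` is an analytic branch of the cubic `4ζ³ + 2x₂ζ + x₁ = 0`, then
`F = (1/4)(3x₁ζ + 2x₂ζ²)` is a primitive of the 1-form `ζ dx₁ + ζ² dx₂`:
`∂₁F = ζ` and `∂₂F = ζ²`. -/
theorem pearcey_leading_primitive
    (U : Set (ℂ × ℂ)) (hU : IsOpen U)
    (ζ : ℂ → ℂ → ℂ)
    (hζ : AnalyticOnNhd ℂ (fun p : ℂ × ℂ => ζ p.1 p.2) U)
    (hroot : ∀ p : ℂ × ℂ, p ∈ U → 4 * (ζ p.1 p.2) ^ 3 + 2 * p.2 * ζ p.1 p.2 + p.1 = 0) :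
    ∀ p : ℂ × ℂ, p ∈ U →
      E1 (fun a b => (1 / 4) * (3 * a * ζ a b + 2 * b * (ζ a b) ^ 2)) p.1 p.2 = ζ p.1 p.2 ∧
      E2 (fun a b => (1 / 4) * (3 * a * ζ a b + 2 * b * (ζ a b) ^ 2)) p.1 p.2
        = (ζ p.1 p.2) ^ 2 := by
  rintro ⟨a, b⟩ hp
  have hAn : AnalyticAt ℂ (fun p : ℂ × ℂ => ζ p.1 p.2) (a, b) := hζ (a, b) hp
  have hdζ : DifferentiableAt ℂ (fun p : ℂ × ℂ => ζ p.1 p.2) (a, b) := hAn.differentiableAt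
  -- partial derivative in the first variable
  have hd1 : DifferentiableAt ℂ (fun w => ζ w b) a := by
    have : DifferentiableAt ℂ ((fun p : ℂ × ℂ => ζ p.1 p.2) ∘ fun w => (w, b)) a :=
      hdζ.comp a (differentiableAt_id.prodMk (differentiableAt_const b))
    exact this
  have hd2 : DifferentiableAt ℂ (fun w => ζ a w) b := by
    have : DifferentiableAt ℂ ((fun p : ℂ × ℂ => ζ p.1 p.2) ∘ fun w => (a, w)) b :=
      hdζ.comp b ((differentiableAt_const a).prodMk differentiableAt_id)
    exact this
  set d : ℂ := deriv (fun w => ζ w b) a with hd_def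
  set e : ℂ := deriv (fun w => ζ a w) b with he_def
  have hg1 : HasDerivAt (fun w => ζ w b) d a := hd1.hasDerivAt
  have hg2 : HasDerivAt (fun w => ζ a w) e b := hd2.hasDerivAt
  set z : ℂ := ζ a b with hz_def
  -- derivative of the cubic relation in the first variable
  have hrel1 : 4 * (3 * z ^ 2 * d) + 2 * b * d + 1 = 0 := by
    have H : HasDerivAt (fun w => 4 * (ζ w b) ^ 3 + 2 * b * (ζ w b) + w)
        (4 * (3 * z ^ 2 * d) + 2 * b * d + 1) a := by
      have h1 := (hg1.pow 3).const_mul (4 : ℂ)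
      have h2 := hg1.const_mul (2 * b)
      have := (h1.add h2).add (hasDerivAt_id a)
      simp at this
      exact this
    have hev : (fun w => 4 * (ζ w b) ^ 3 + 2 * b * (ζ w b) + w) =ᶠ[nhds a]
        (fun _ => (0 : ℂ)) := by
      have hopen : IsOpen {w : ℂ | (w, b) ∈ U} :=
        hU.preimage (continuous_id.prodMk continuous_const)
      filter_upwards [hopen.mem_nhds hp] with w hw
      exact hroot (w, b) hw
    have H0 : HasDerivAt (fun _ : ℂ => (0 : ℂ))
        (4 * (3 * z ^ 2 * d) + 2 * b * d + 1) a := H.congr_of_eventuallyEq hev.symm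
    have := H0.deriv
    simpa using this.symm
  -- derivative of the cubic relation in the second variable
  have hrel2 : 4 * (3 * z ^ 2 * e) + (2 * z + 2 * b * e) = 0 := by
    have H : HasDerivAt (fun w => 4 * (ζ a w) ^ 3 + 2 * w * (ζ a w) + a)
        (4 * (3 * z ^ 2 * e) + (2 * z + 2 * b * e)) b := by
      have h1 := (hg2.pow 3).const_mul (4 : ℂ)
      have h2 : HasDerivAt (fun w => 2 * w * ζ a w) (2 * 1 * z + 2 * b * e) b :=
        ((hasDerivAt_id b).const_mul 2).mul hg2
      have := (h1.add h2).add_const a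
      simpa using this
    have hev : (fun w => 4 * (ζ a w) ^ 3 + 2 * w * (ζ a w) + a) =ᶠ[nhds b]
        (fun _ => (0 : ℂ)) := by
      have hopen : IsOpen {w : ℂ | (a, w) ∈ U} :=
        hU.preimage (continuous_const.prodMk continuous_id)
      filter_upwards [hopen.mem_nhds hp] with w hw
      exact hroot (a, w) hw
    have H0 : HasDerivAt (fun _ : ℂ => (0 : ℂ))
        (4 * (3 * z ^ 2 * e) + (2 * z + 2 * b * e)) b := H.congr_of_eventuallyEq hev.symm
    have := H0.deriv
    simpa using this.symm
  have hroot_p : 4 * z ^ 3 + 2 * b * z + a = 0 := hroot (a, b) hp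
  constructor
  · -- ∂₁ F = ζ
    have HF : HasDerivAt (fun w => (1 / 4 : ℂ) * (3 * w * ζ w b + 2 * b * (ζ w b) ^ 2))
        ((1 / 4) * ((3 * 1 * z + 3 * a * d) + 2 * b * (2 * z ^ 1 * d))) a := by
      have h1 : HasDerivAt (fun w => 3 * w * ζ w b) (3 * 1 * z + 3 * a * d) a :=
        ((hasDerivAt_id a).const_mul 3).mul hg1
      have h2 := (hg1.pow 2).const_mul (2 * b)
      exact (h1.add h2).const_mul (1 / 4)
    have := HF.deriv
    simp only [E1]
    rw [this]
    ring_nf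
    linear_combination (3 / 4 * d) * hroot_p - (z / 4) * hrel1
  · -- ∂₂ F = ζ²
    have HF : HasDerivAt (fun w => (1 / 4 : ℂ) * (3 * a * ζ a w + 2 * w * (ζ a w) ^ 2))
        ((1 / 4) * ((3 * a) * e + (2 * 1 * z ^ 2 + 2 * b * (2 * z ^ 1 * e)))) b := by
      have h1 := hg2.const_mul (3 * a)
      have h2 : HasDerivAt (fun w => 2 * w * (ζ a w) ^ 2)
          (2 * 1 * z ^ 2 + 2 * b * (2 * z ^ 1 * e)) b :=
        ((hasDerivAt_id b).const_mul 2).mul (hg2.pow 2)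
      exact (h1.add h2).const_mul (1 / 4)
    have := HF.deriv
    simp only [E2]
    rw [this]
    ring_nf
    linear_combination (3 / 4 * e) * hroot_p - (z / 4) * hrel2
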